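/- For all integers n ≥ 0, k ≥ 0, m with 0 ≤ m ≤ n, and l with 0 ≤ l ≤ k, the Lie bracket of the vector fields B(m,n) and B(l,k) satisfies [B(m,n), B(l,k)] = (k−n)·B(m+l, n+k). (Part of Lemma 2.1.) -/

import Mathlib

/-- Monomial `x^a * y^b` for integer exponents, zero if an exponent is negative. -/
noncomputable def M (a b : ℤ) : ℝ × ℝ → ℝ :=
  fun p => if 0 ≤ a ∧ 0 ≤ b then p.1 ^ a.toNat * p.2 ^ b.toNat else 0

/-- The vector field `A(l,k)`. -/
noncomputable def A (l k : ℤ) : ℝ × ℝ → ℝ × ℝ :=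
  fun p => (((k : ℝ) - (l : ℝ) + 1) / ((k : ℝ) + 2) * M (l + 1) (k - l) p,
            -(((l : ℝ) + 1) / ((k : ℝ) + 2)) * M l (k - l + 1) p)

/-- The vector field `B(l,k)`. -/
noncomputable def B (l k : ℤ) : ℝ × ℝ → ℝ × ℝ :=
  fun p => (M (l + 1) (k - l) p, M l (k - l + 1) p)

/-- The scalar monomial function `Z(l,k)`. -/
noncomputable def Z (l k : ℤ) : ℝ × ℝ → ℝ := M l (k - l)

/-- Lie bracket of planar vector fields: `[X,Y](p) = DY(p)(X(p)) - DX(p)(Y(p))`. -/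
noncomputable def lieBracket (X Y : ℝ × ℝ → ℝ × ℝ) : ℝ × ℝ → ℝ × ℝ :=
  fun p => fderiv ℝ Y p (X p) - fderiv ℝ X p (Y p)

lemma monoDeriv (a b : ℕ) (p : ℝ × ℝ) :
    HasFDerivAt (fun q : ℝ × ℝ => q.1 ^ a * q.2 ^ b)
      (((a : ℝ) * p.1 ^ (a - 1) * p.2 ^ b) • (ContinuousLinearMap.fst ℝ ℝ ℝ) +
       ((b : ℝ) * p.1 ^ a * p.2 ^ (b - 1)) • (ContinuousLinearMap.snd ℝ ℝ ℝ)) p := by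
  have hf : HasFDerivAt (Prod.fst : ℝ × ℝ → ℝ) (ContinuousLinearMap.fst ℝ ℝ ℝ) p :=
    hasFDerivAt_fst
  have hs : HasFDerivAt (Prod.snd : ℝ × ℝ → ℝ) (ContinuousLinearMap.snd ℝ ℝ ℝ) p :=
    hasFDerivAt_snd
  have h1 := (hasDerivAt_pow a p.1).comp_hasFDerivAt p hf
  have h2 := (hasDerivAt_pow b p.2).comp_hasFDerivAt p hs
  have h := h1.mul h2
  refine h.congr_fderiv ?_
  ext <;> simp <;> ring

lemma B_eq (a e : ℕ) :
    B (a : ℤ) ((a : ℤ) + (e : ℤ)) =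
      fun p : ℝ × ℝ => (p.1 ^ (a + 1) * p.2 ^ e, p.1 ^ a * p.2 ^ (e + 1)) := by
  funext p
  have h1 : ((a : ℤ) + (e : ℤ)) - a = (e : ℤ) := by ring
  simp only [B, M, h1]
  rw [if_pos ⟨by positivity, by positivity⟩, if_pos ⟨by positivity, by positivity⟩]
  have e1 : ((a : ℤ) + 1).toNat = a + 1 := by omega
  have e2 : ((e : ℤ)).toNat = e := by omega
  have e3 : ((a : ℤ)).toNat = a := by omega
  have e4 : ((e : ℤ) + 1).toNat = e + 1 := by omega
  rw [e1, e2, e3, e4]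

lemma B_hasDeriv (a e : ℕ) (p : ℝ × ℝ) :
    HasFDerivAt (B (a : ℤ) ((a : ℤ) + (e : ℤ)))
      (((((a : ℝ) + 1) * p.1 ^ a * p.2 ^ e) • (ContinuousLinearMap.fst ℝ ℝ ℝ) +
        ((e : ℝ) * p.1 ^ (a + 1) * p.2 ^ (e - 1)) • (ContinuousLinearMap.snd ℝ ℝ ℝ)).prod
       (((a : ℝ) * p.1 ^ (a - 1) * p.2 ^ (e + 1)) • (ContinuousLinearMap.fst ℝ ℝ ℝ) +
        (((e : ℝ) + 1) * p.1 ^ a * p.2 ^ e) • (ContinuousLinearMap.snd ℝ ℝ ℝ))) p := by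
  rw [B_eq]
  have h1 := monoDeriv (a + 1) e p
  have h2 := monoDeriv a (e + 1) p
  have h := HasFDerivAt.prodMk h1 h2
  simp only [Nat.add_sub_cancel, Nat.cast_add, Nat.cast_one] at h
  exact h

theorem stmt1 (n k m l : ℤ) (hn : 0 ≤ n) (hk : 0 ≤ k) (hm0 : 0 ≤ m) (hmn : m ≤ n)
    (hl0 : 0 ≤ l) (hlk : l ≤ k) :
    lieBracket (B m n) (B l k) = fun p => ((k : ℝ) - (n : ℝ)) • B (m + l) (n + k) p := by
  lift m to ℕ using hm0
  lift n to ℕ using hn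
  lift l to ℕ using hl0
  lift k to ℕ using hk
  rw [Int.ofNat_le] at hmn hlk
  obtain ⟨e, rfl⟩ := Nat.exists_eq_add_of_le hmn
  obtain ⟨f, rfl⟩ := Nat.exists_eq_add_of_le hlk
  funext p
  have hX := B_hasDeriv m e p
  have hY := B_hasDeriv l f p
  have hcast1 : ((m + e : ℕ) : ℤ) = (m : ℤ) + (e : ℤ) := by push_cast; ring
  have hcast2 : ((l + f : ℕ) : ℤ) = (l : ℤ) + (f : ℤ) := by push_cast; ring
  have hcast3 : ((m : ℤ) + (e : ℤ)) + ((l : ℤ) + (f : ℤ)) =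
      ((m + l : ℕ) : ℤ) + ((e + f : ℕ) : ℤ) := by push_cast; ring
  have hcast4 : (m : ℤ) + (l : ℤ) = ((m + l : ℕ) : ℤ) := by push_cast; ring
  simp only [lieBracket, hcast1, hcast2]
  rw [hX.fderiv, hY.fderiv, hcast3, hcast4, B_eq, B_eq, B_eq]
  simp only [ContinuousLinearMap.prod_apply, ContinuousLinearMap.add_apply,
    ContinuousLinearMap.smul_apply, ContinuousLinearMap.coe_fst', ContinuousLinearMap.coe_snd',
    smul_eq_mul, Prod.mk_sub_mk, Prod.smul_mk]
  refine Prod.ext ?_ ?_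
  · simp only [Prod.smul_fst, smul_eq_mul]
    rcases f with _ | f <;> rcases e with _ | e <;> push_cast <;> ring
  · simp only [Prod.smul_snd, smul_eq_mul]
    rcases m with _ | m <;> rcases l with _ | l <;> push_cast <;> ring
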